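/- Let $d\ge 2$, $\tau_1,\ldots,\tau_d>0$, and $k\in\{1,\ldots,d\}$. The $k$-dimensional volume of the simplex $[e_{i_0}/\tau_{i_0},\ldots,e_{i_k}/\tau_{i_k}]$, for distinct indices $i_0<\cdots<i_k$ and standard basis vectors $e_i$ of $\mathbb{R}^d$, equals $\frac{\sqrt{\tau_{i_0}^2+\cdots+\tau_{i_k}^2}}{k!\,\tau_{i_0}\cdots\tau_{i_k}}$. -/

import Mathlib

open scoped RealInnerProductSpace
open Finset

lemma det_diag_add_const {n : Type*} [Fintype n] [DecidableEq n]
    (f : n → ℝ) (hf : ∀ a, f a ≠ 0) (c : ℝ) :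
    Matrix.det (Matrix.of fun a b => (if a = b then f a else 0) + c)
      = (∏ a, f a) * (1 + c * ∑ a, (f a)⁻¹) := by
  have h1 : (Matrix.of fun a b => (if a = b then f a else 0) + c)
      = Matrix.diagonal f + (Matrix.replicateCol Unit (fun _ => c) : Matrix n Unit ℝ) *
          (Matrix.replicateRow Unit (fun _ => 1) : Matrix Unit n ℝ) := by
    ext a b
    simp [Matrix.diagonal, Matrix.mul_apply, Matrix.replicateCol, Matrix.replicateRow]
  have hinv : (Matrix.diagonal f)⁻¹ = Matrix.diagonal fun a => (f a)⁻¹ :=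
    Matrix.inv_eq_right_inv (by
      rw [Matrix.diagonal_mul_diagonal]
      convert Matrix.diagonal_one
      simp [mul_inv_cancel₀ (hf _)])
  rw [h1, Matrix.det_add_replicateCol_mul_replicateRow (by simp [Matrix.det_diagonal, Finset.prod_ne_zero_iff, hf])]
  rw [Matrix.det_diagonal, Matrix.det_unique, hinv]
  congr 1
  simp [Matrix.mul_apply, Matrix.replicateRow, Matrix.replicateCol, Matrix.diagonal, mul_comm, Finset.mul_sum]

theorem volume_face_rectangular (d : ℕ) (hd : 2 ≤ d)
    (τ : Fin d → ℝ) (hτ : ∀ i, 0 < τ i)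
    (k : ℕ) (hk1 : 1 ≤ k) (hk : k ≤ d)
    (ι : Fin (k + 1) → Fin d) (hι : StrictMono ι) :
    let e : Fin d → EuclideanSpace ℝ (Fin d) := fun i => EuclideanSpace.single i 1
    let v : Fin (k + 1) → EuclideanSpace ℝ (Fin d) := fun a => (τ (ι a))⁻¹ • e (ι a)
    (1 / (k.factorial : ℝ)) *
        Real.sqrt (Matrix.det (fun a b : Fin k => ⟪v a.succ - v 0, v b.succ - v 0⟫))
      = Real.sqrt (∑ a, (τ (ι a)) ^ 2) / ((k.factorial : ℝ) * ∏ a, τ (ι a)) := by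
  intro e v
  set t : Fin (k + 1) → ℝ := fun a => τ (ι a) with ht
  have htpos : ∀ a, 0 < t a := fun a => hτ _
  have hinj := hι.injective
  have hent : ∀ a b : Fin k, ⟪v a.succ - v 0, v b.succ - v 0⟫
      = (if a = b then ((t a.succ)⁻¹)^2 else 0) + ((t 0)⁻¹)^2 := by
    intro a b
    have hne : ∀ c : Fin k, ι c.succ ≠ ι 0 := fun c h => (Fin.succ_ne_zero c) (hinj h)
    simp only [v, e, inner_sub_left, inner_sub_right, real_inner_smul_left,
      real_inner_smul_right, EuclideanSpace.inner_single_left, EuclideanSpace.single_apply,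
      conj_trivial]
    by_cases hab : a = b
    · subst hab
      simp only [ht, if_pos rfl, if_neg (Ne.symm (hne a)), if_neg (hne a), if_true,
        mul_one, mul_zero, one_mul]
      ring
    · have h1 : ι a.succ ≠ ι b.succ := fun h => hab (Fin.succ_injective _ (hinj h))
      simp only [ht, if_neg h1, if_neg (Ne.symm (hne b)), if_neg (hne a), if_neg hab, if_true,
        mul_one, mul_zero, one_mul]
      ring
  have hdet : Matrix.det (fun a b : Fin k => ⟪v a.succ - v 0, v b.succ - v 0⟫)
      = (∏ a : Fin k, ((t a.succ)⁻¹)^2) *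
          (1 + ((t 0)⁻¹)^2 * ∑ a : Fin k, (((t a.succ)⁻¹)^2)⁻¹) := by
    rw [show (fun a b : Fin k => ⟪v a.succ - v 0, v b.succ - v 0⟫)
        = Matrix.of fun a b : Fin k =>
            (if a = b then ((t a.succ)⁻¹)^2 else 0) + ((t 0)⁻¹)^2 from by
      ext a b; exact hent a b]
    exact det_diag_add_const _ (fun a => by have := htpos a.succ; positivity) _
  have h2 : (∏ a : Fin k, ((t a.succ)⁻¹)^2) *
        (1 + ((t 0)⁻¹)^2 * ∑ a : Fin k, (((t a.succ)⁻¹)^2)⁻¹)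
      = (∑ a, (t a)^2) / (∏ a, t a)^2 := by
    have h0 : (0:ℝ) < t 0 := htpos 0
    have hP : (0:ℝ) < ∏ a : Fin k, t a.succ := Finset.prod_pos fun a _ => htpos _
    rw [Fin.sum_univ_succ, Fin.prod_univ_succ]
    simp only [inv_pow, inv_inv]
    rw [Finset.prod_inv_distrib, Finset.prod_pow,
      eq_div_iff (by positivity : ((t 0 * ∏ a : Fin k, t a.succ)^2 : ℝ) ≠ 0)]
    field_simp
  rw [hdet, h2]
  have hSnn : (0:ℝ) ≤ ∑ a, t a ^ 2 := Finset.sum_nonneg fun a _ => sq_nonneg _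
  have hPpos : (0:ℝ) < ∏ a, t a := Finset.prod_pos fun a _ => htpos _
  rw [Real.sqrt_div hSnn, Real.sqrt_sq hPpos.le]
  have hτS : (∑ a, τ (ι a) ^ 2) = ∑ a, t a ^ 2 := rfl
  rw [hτS]
  have hkf : (0:ℝ) < (k.factorial : ℝ) := by positivity
  field_simp
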